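/- Let d ≥ 1 and n ≥ 2 be integers, let v ∈ ℤ^d have every entry coprime to n, and let δ ∈ ℤ^d. Then the wrap-around separation distance of L(n,v,δ) satisfies min_{x,y ∈ L(n,v,δ), x ≠ y} w(x − y) = min_{i=1,…,n−1} (Σ_{k=1}^d w(i·v_k/n)²)^{1/2}; equivalently, the wrap-around reciprocal separation criterion c_WS(L(n,v,δ)) = max_{x ≠ y} w(x−y)^{−1} equals [min_{i=1,…,n−1} Σ_{k=1}^d w(i·v_k/n)²]^{−1/2}. -/

import Mathlib

open Finset

/-- Distance from a real number to the nearest integer: w(t) = min over z in ZZ of |t - z|. -/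
noncomputable def nid (t : ℝ) : ℝ := ⨅ z : ℤ, |t - (z : ℝ)|

/-- Wrap-around distance on ℝ^d. -/
noncomputable def wdist {d : ℕ} (u : Fin d → ℝ) : ℝ := Real.sqrt (∑ k, nid (u k) ^ 2)

/-- Lattice-based Latin hypercube design
L(n,v,δ) = { z + i·v/n + δ/n + 1_d/(2n) : z ∈ ℤ^d, i ∈ ℤ } ∩ [0,1]^d. -/
def LHDset (d n : ℕ) (v : Fin d → ℤ) (δ : Fin d → ℝ) : Set (Fin d → ℝ) :=
  {x | (∃ (z : Fin d → ℤ) (i : ℤ),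
          x = fun k => (z k : ℝ) + (i : ℝ) * (v k : ℝ) / n + δ k / n + 1 / (2 * n)) ∧
       ∀ k, x k ∈ Set.Icc (0 : ℝ) 1}

lemma nid_eq_round (t : ℝ) : nid t = |t - round t| := by
  apply le_antisymm
  · exact ciInf_le ⟨0, by rintro _ ⟨z, rfl⟩; positivity⟩ (round t)
  · apply le_ciInf
    intro z
    rcases eq_or_ne z (round t) with rfl | h
    · rfl
    · have h1 : |t - round t| ≤ 1/2 := abs_sub_round t
      have h2 : (1:ℝ) ≤ |(round t : ℝ) - z| := by
        have : (1:ℤ) ≤ |round t - z| := Int.one_le_abs (sub_ne_zero.mpr (Ne.symm h))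
        calc (1:ℝ) = ((1:ℤ):ℝ) := by norm_num
        _ ≤ ((|round t - z| : ℤ) : ℝ) := by exact_mod_cast this
        _ = |(round t : ℝ) - z| := by push_cast; ring_nf
      have h3 : |(round t : ℝ) - z| - |t - round t| ≤ |t - z| := by
        have := abs_sub_abs_le_abs_sub ((round t : ℝ) - z) ((round t : ℝ) - t)
        rw [abs_sub_comm ((round t:ℝ)) t] at this
        have h4 : (round t : ℝ) - z - ((round t:ℝ) - t) = t - z := by ring
        rw [h4] at this
        linarith [this]
      linarith

lemma nid_nonneg (t : ℝ) : 0 ≤ nid t := by rw [nid_eq_round]; positivity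

lemma nid_add_int (t : ℝ) (m : ℤ) : nid (t + m) = nid t := by
  rw [nid_eq_round, nid_eq_round, round_add_intCast]
  push_cast
  ring_nf

lemma nid_eq_zero_iff (t : ℝ) : nid t = 0 ↔ ∃ m : ℤ, t = m := by
  rw [nid_eq_round, abs_eq_zero, sub_eq_zero]
  exact ⟨fun h => ⟨round t, h⟩, fun ⟨m, hm⟩ => by subst hm; rw [round_intCast]⟩

noncomputable def Fpt (d n : ℕ) (v δ : Fin d → ℤ) (i : ℤ) : Fin d → ℝ :=
  fun k => Int.fract ((i : ℝ) * (v k : ℝ) / n + (δ k : ℝ) / n + 1 / (2 * n))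

lemma rval_not_int {d n : ℕ} (hn : 2 ≤ n) (v δ : Fin d → ℤ) (i : ℤ) (k : Fin d)
    (m : ℤ) : (i : ℝ) * (v k : ℝ) / n + (δ k : ℝ) / n + 1 / (2 * n) ≠ m := by
  intro h
  have hn0 : (n:ℝ) ≠ 0 := by positivity
  field_simp at h
  have h3 : (i * v k + δ k) * (2 * n) + n = m * (n * (2 * n)) := by
    have h' : ((i * v k + δ k) * 2 + 1 : ℤ) = n * 2 * m := by exact_mod_cast h
    linear_combination (n:ℤ) * h'
  have hne : (n:ℤ) ≠ 0 := by exact_mod_cast hn0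
  have h4 : (n:ℤ) * (2*(i * v k + δ k) + 1) = n * (2*(n*m)) := by linear_combination h3
  have h5 : 2*(i * v k + δ k) + 1 = 2*(n*m) := mul_left_cancel₀ hne h4
  have h6 : Even (2*(i * v k + δ k) + 1) := by rw [h5]; exact even_two_mul _
  simp [Int.even_add_one, parity_simps] at h6
  exact Int.not_odd_iff_even.mpr (even_two_mul _) h6

lemma Fpt_mem {d n : ℕ} (hn : 2 ≤ n) (v δ : Fin d → ℤ) (i : ℤ) :
    Fpt d n v δ i ∈ LHDset d n v (fun k => (δ k : ℝ)) := by
  constructor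
  · refine ⟨fun k => -⌊(i : ℝ) * (v k : ℝ) / n + (δ k : ℝ) / n + 1 / (2 * n)⌋, i, ?_⟩
    funext k
    simp only [Fpt, Int.fract]
    push_cast
    ring
  · intro k
    exact ⟨Int.fract_nonneg _, le_of_lt (Int.fract_lt_one _)⟩

lemma mem_eq_Fpt {d n : ℕ} (hn : 2 ≤ n) (v δ : Fin d → ℤ) (x : Fin d → ℝ)
    (hx : x ∈ LHDset d n v (fun k => (δ k : ℝ))) : ∃ i : ℤ, x = Fpt d n v δ i := by
  obtain ⟨⟨z, i, hzi⟩, hbd⟩ := hx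
  refine ⟨i, funext fun k => ?_⟩
  set r : ℝ := (i : ℝ) * (v k : ℝ) / n + (δ k : ℝ) / n + 1 / (2 * n) with hr
  have hxk : x k = r + z k := by rw [hzi]; ring
  have hfr : Int.fract (x k) = Fpt d n v δ i k := by
    rw [hxk, Int.fract_add_intCast]; rfl
  have hne1 : x k ≠ 1 := by
    intro h1
    have h2 : Int.fract (x k) = 0 := by rw [h1]; simp
    rw [hfr] at h2
    have h3 : r = (⌊r⌋ : ℝ) := by
      have : r - ⌊r⌋ = 0 := h2
      linarith
    exact rval_not_int hn v δ i k ⌊r⌋ h3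
  rw [← hfr]
  exact (Int.fract_eq_self.mpr ⟨(hbd k).1, lt_of_le_of_ne (hbd k).2 hne1⟩).symm

lemma wdist_Fpt {d n : ℕ} (hn : 2 ≤ n) (v δ : Fin d → ℤ) (i i' : ℤ) :
    wdist (Fpt d n v δ i - Fpt d n v δ i') =
      Real.sqrt (∑ k, nid (((i - i' : ℤ) : ℝ) * (v k : ℝ) / n) ^ 2) := by
  unfold wdist
  congr 1
  refine Finset.sum_congr rfl fun k _ => ?_
  congr 1
  rw [Pi.sub_apply]
  simp only [Fpt, Int.fract]
  have hn0 : (n:ℝ) ≠ 0 := by positivity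
  have heq : ((i : ℝ) * (v k : ℝ) / n + (δ k : ℝ) / n + 1 / (2 * n)
        - ⌊(i : ℝ) * (v k : ℝ) / n + (δ k : ℝ) / n + 1 / (2 * n)⌋)
      - ((i' : ℝ) * (v k : ℝ) / n + (δ k : ℝ) / n + 1 / (2 * n)
        - ⌊(i' : ℝ) * (v k : ℝ) / n + (δ k : ℝ) / n + 1 / (2 * n)⌋)
      = ((i - i' : ℤ) : ℝ) * (v k : ℝ) / n +
        ((⌊(i' : ℝ) * (v k : ℝ) / n + (δ k : ℝ) / n + 1 / (2 * n)⌋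
          - ⌊(i : ℝ) * (v k : ℝ) / n + (δ k : ℝ) / n + 1 / (2 * n)⌋ : ℤ) : ℝ) := by
    push_cast
    field_simp
    ring
  rw [heq, nid_add_int]

lemma nid_mod {n : ℕ} (hn : 2 ≤ n) (j c : ℤ) :
    nid (((j % (n:ℤ) : ℤ) : ℝ) * (c : ℝ) / n) = nid ((j : ℝ) * (c : ℝ) / n) := by
  have hn0 : (n:ℝ) ≠ 0 := by positivity
  have hz : (j:ℝ) = ((j % (n:ℤ) : ℤ):ℝ) + (n:ℝ) * ((j / (n:ℤ) : ℤ):ℝ) := by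
    exact_mod_cast (Int.emod_add_mul_ediv j n).symm
  have heq : (j : ℝ) * c / n = ((j % (n:ℤ) : ℤ):ℝ) * c / n + ((j / (n:ℤ) * c : ℤ):ℝ) := by
    push_cast
    field_simp
    linear_combination (c:ℝ) * hz
  rw [heq, nid_add_int]

lemma Fpt_eq {d n : ℕ} (hn : 2 ≤ n) (v δ : Fin d → ℤ) (i i' : ℤ)
    (hdvd : (n:ℤ) ∣ (i - i')) : Fpt d n v δ i = Fpt d n v δ i' := by
  obtain ⟨q, hq⟩ := hdvd
  funext k
  have hn0 : (n:ℝ) ≠ 0 := by positivity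
  have hii' : (i:ℝ) = (i':ℝ) + n * q := by
    have : (i:ℝ) - i' = n * q := by exact_mod_cast hq
    linarith
  have hii2 : (i:ℝ) * (v k : ℝ) / n = (i':ℝ) * (v k : ℝ) / n + (q:ℝ) * (v k : ℝ) := by
    rw [hii']; field_simp
  set M : ℤ := q * v k + ⌊(i' : ℝ) * (v k : ℝ) / n + (δ k : ℝ) / n + 1 / (2 * n)⌋
        - ⌊(i : ℝ) * (v k : ℝ) / n + (δ k : ℝ) / n + 1 / (2 * n)⌋ with hM
  have h1 : Fpt d n v δ i k - Fpt d n v δ i' k = (M : ℝ) := by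
    rw [hM]
    simp only [Fpt, Int.fract]
    push_cast
    linear_combination hii2
  have h2 : |Fpt d n v δ i k - Fpt d n v δ i' k| < 1 := by
    have a1 := Int.fract_nonneg ((i : ℝ) * (v k : ℝ) / n + (δ k : ℝ) / n + 1 / (2 * n))
    have a2 := Int.fract_lt_one ((i : ℝ) * (v k : ℝ) / n + (δ k : ℝ) / n + 1 / (2 * n))
    have a3 := Int.fract_nonneg ((i' : ℝ) * (v k : ℝ) / n + (δ k : ℝ) / n + 1 / (2 * n))
    have a4 := Int.fract_lt_one ((i' : ℝ) * (v k : ℝ) / n + (δ k : ℝ) / n + 1 / (2 * n))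
    rw [abs_lt]
    constructor <;> simp only [Fpt] <;> [linarith; linarith]
  rw [h1] at h2
  have h3 : |M| < 1 := by exact_mod_cast h2
  have h4 : M = 0 := by have := abs_lt.mp h3; omega
  rw [h4] at h1
  simpa [sub_eq_zero] using h1

lemma Fpt_ne {d n : ℕ} (hd : 1 ≤ d) (hn : 2 ≤ n) (v δ : Fin d → ℤ)
    (hco : ∀ k, IsCoprime (v k) (n : ℤ)) (i i' : ℤ) (hnd : ¬ (n:ℤ) ∣ (i - i')) :
    Fpt d n v δ i ≠ Fpt d n v δ i' := by
  intro heq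
  set k₀ : Fin d := ⟨0, hd⟩
  have h0 : Fpt d n v δ i k₀ = Fpt d n v δ i' k₀ := by rw [heq]
  have hn0 : (n:ℝ) ≠ 0 := by positivity
  simp only [Fpt, Int.fract] at h0
  set m : ℤ := ⌊(i : ℝ) * (v k₀ : ℝ) / n + (δ k₀ : ℝ) / n + 1 / (2 * n)⌋
      - ⌊(i' : ℝ) * (v k₀ : ℝ) / n + (δ k₀ : ℝ) / n + 1 / (2 * n)⌋ with hm
  have h0' : ((i:ℝ) * (v k₀ : ℝ) - (i':ℝ) * (v k₀ : ℝ)) / n = (m:ℝ) := by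
    rw [hm, sub_div]
    push_cast
    linarith
  have h5 : (i:ℝ) * (v k₀ : ℝ) - (i':ℝ) * (v k₀ : ℝ) = (m:ℝ) * n := (div_eq_iff hn0).mp h0'
  have h2 : i * v k₀ - i' * v k₀ = m * n := by exact_mod_cast h5
  have h3 : (n:ℤ) ∣ (i - i') * v k₀ := ⟨m, by linear_combination h2⟩
  exact hnd ((hco k₀).symm.dvd_of_dvd_mul_right h3)

/-- the wrap-around separation distance of L(n,v,δ) equals
min over i = 1,…,n−1 of (Σ_k w(i·v_k/n)²)^{1/2}; equivalently, the wrap-around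
reciprocal separation criterion c_WS equals that minimum to the power −1/2. -/
theorem stmt_3 (d n : ℕ) (hd : 1 ≤ d) (hn : 2 ≤ n) (v δ : Fin d → ℤ)
    (hco : ∀ k, IsCoprime (v k) (n : ℤ))
    (S : Set (Fin d → ℝ)) (hS : S = LHDset d n v (fun k => (δ k : ℝ))) :
    sInf {r : ℝ | ∃ x ∈ S, ∃ y ∈ S, x ≠ y ∧ r = wdist (x - y)} =
      sInf {r : ℝ | ∃ i : ℕ, 1 ≤ i ∧ i ≤ n - 1 ∧
        r = Real.sqrt (∑ k, nid ((i : ℝ) * (v k : ℝ) / n) ^ 2)} ∧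
    sSup {r : ℝ | ∃ x ∈ S, ∃ y ∈ S, x ≠ y ∧ r = (wdist (x - y))⁻¹} =
      (Real.sqrt (sInf {s : ℝ | ∃ i : ℕ, 1 ≤ i ∧ i ≤ n - 1 ∧
        s = ∑ k, nid ((i : ℝ) * (v k : ℝ) / n) ^ 2}))⁻¹ := by
  subst hS
  set S := LHDset d n v (fun k => (δ k : ℝ)) with hSdef
  have hn0 : (n:ℤ) ≠ 0 := by positivity
  have hnpos : (0:ℤ) < n := by positivity
  -- forward: every separation value has the canonical form
  have hfwd : ∀ x ∈ S, ∀ y ∈ S, x ≠ y → ∃ i : ℕ, 1 ≤ i ∧ i ≤ n - 1 ∧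
      wdist (x - y) = Real.sqrt (∑ k, nid ((i : ℝ) * (v k : ℝ) / n) ^ 2) := by
    intro x hx y hy hxy
    obtain ⟨i, rfl⟩ := mem_eq_Fpt hn v δ x hx
    obtain ⟨i', rfl⟩ := mem_eq_Fpt hn v δ y hy
    set j : ℤ := (i - i') % n with hj
    have hjne : j ≠ 0 := by
      intro h0
      exact hxy (Fpt_eq hn v δ i i' (Int.dvd_of_emod_eq_zero h0))
    have hj1 : 0 ≤ j := Int.emod_nonneg _ hn0
    have hj2 : j < n := Int.emod_lt_of_pos _ hnpos
    refine ⟨j.toNat, by omega, by omega, ?_⟩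
    have hc : ((j.toNat : ℕ) : ℝ) = ((j : ℤ) : ℝ) := by
      exact_mod_cast congrArg (Int.cast : ℤ → ℝ) (Int.toNat_of_nonneg hj1)
    rw [wdist_Fpt hn v δ i i']
    congr 1
    refine Finset.sum_congr rfl fun k _ => ?_
    rw [hc, hj, nid_mod hn (i - i') (v k)]
  -- backward: every canonical value is attained
  have hbwd : ∀ i : ℕ, 1 ≤ i → i ≤ n - 1 → ∃ x ∈ S, ∃ y ∈ S, x ≠ y ∧
      wdist (x - y) = Real.sqrt (∑ k, nid ((i : ℝ) * (v k : ℝ) / n) ^ 2) := by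
    intro i h1 h2
    have hnd : ¬ (n:ℤ) ∣ ((i:ℤ) - 0) := by
      rw [sub_zero]
      intro hdvd
      have := Int.le_of_dvd (by exact_mod_cast h1) hdvd
      omega
    refine ⟨Fpt d n v δ i, Fpt_mem hn v δ i, Fpt d n v δ 0, Fpt_mem hn v δ 0,
      Fpt_ne hd hn v δ hco i 0 hnd, ?_⟩
    rw [wdist_Fpt hn v δ i 0]
    norm_num
  -- set equality
  have hAB : {r : ℝ | ∃ x ∈ S, ∃ y ∈ S, x ≠ y ∧ r = wdist (x - y)} =
      {r : ℝ | ∃ i : ℕ, 1 ≤ i ∧ i ≤ n - 1 ∧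
        r = Real.sqrt (∑ k, nid ((i : ℝ) * (v k : ℝ) / n) ^ 2)} := by
    ext r
    constructor
    · rintro ⟨x, hx, y, hy, hxy, rfl⟩
      obtain ⟨i, h1, h2, hw⟩ := hfwd x hx y hy hxy
      exact ⟨i, h1, h2, hw⟩
    · rintro ⟨i, h1, h2, rfl⟩
      obtain ⟨x, hx, y, hy, hxy, hw⟩ := hbwd i h1 h2
      exact ⟨x, hx, y, hy, hxy, hw.symm⟩
  refine ⟨by rw [hAB], ?_⟩
  -- the set of squared sums
  set C := {s : ℝ | ∃ i : ℕ, 1 ≤ i ∧ i ≤ n - 1 ∧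
      s = ∑ k, nid ((i : ℝ) * (v k : ℝ) / n) ^ 2} with hC
  have hCfin : C.Finite := by
    have : C = (fun i : ℕ => ∑ k, nid ((i : ℝ) * (v k : ℝ) / n) ^ 2) '' (Set.Icc 1 (n-1)) := by
      ext s
      simp only [hC, Set.mem_setOf_eq, Set.mem_image, Set.mem_Icc]
      constructor
      · rintro ⟨i, h1, h2, rfl⟩; exact ⟨i, ⟨h1, h2⟩, rfl⟩
      · rintro ⟨i, ⟨h1, h2⟩, rfl⟩; exact ⟨i, h1, h2, rfl⟩
    rw [this]
    exact (Set.finite_Icc _ _).image _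
  have hCne : C.Nonempty := ⟨_, 1, le_refl 1, by omega, rfl⟩
  have hmem : sInf C ∈ C := hCne.csInf_mem hCfin
  have hpos : ∀ c ∈ C, 0 < c := by
    rintro c ⟨i, h1, h2, rfl⟩
    apply Finset.sum_pos'
    · intro k _
      positivity
    · refine ⟨⟨0, hd⟩, Finset.mem_univ _, ?_⟩
      have hne0 : nid ((i : ℝ) * (v ⟨0, hd⟩ : ℝ) / n) ≠ 0 := by
        rw [Ne, nid_eq_zero_iff]
        rintro ⟨m, hm⟩
        have hnR : (n:ℝ) ≠ 0 := by positivity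
        have h5 : (i:ℝ) * (v ⟨0, hd⟩ : ℝ) = (m:ℝ) * n := (div_eq_iff hnR).mp hm
        have h6 : (i:ℤ) * v ⟨0, hd⟩ = m * n := by exact_mod_cast h5
        have hdvd : (n:ℤ) ∣ (i:ℤ) * v ⟨0, hd⟩ := ⟨m, by linear_combination h6⟩
        have := (hco ⟨0, hd⟩).symm.dvd_of_dvd_mul_right hdvd
        have := Int.le_of_dvd (by exact_mod_cast h1) this
        omega
      exact pow_pos (lt_of_le_of_ne (nid_nonneg _) (Ne.symm hne0)) 2
  have hmpos : 0 < sInf C := hpos _ hmem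
  have hsq : 0 < Real.sqrt (sInf C) := Real.sqrt_pos.mpr hmpos
  apply IsGreatest.csSup_eq
  constructor
  · obtain ⟨i₀, h1, h2, hgi⟩ := hmem
    obtain ⟨x, hx, y, hy, hxy, hw⟩ := hbwd i₀ h1 h2
    exact ⟨x, hx, y, hy, hxy, by rw [hw, ← hgi]⟩
  · rintro r ⟨x, hx, y, hy, hxy, rfl⟩
    obtain ⟨i, h1, h2, hw⟩ := hfwd x hx y hy hxy
    rw [hw]
    have hle : sInf C ≤ ∑ k, nid ((i : ℝ) * (v k : ℝ) / n) ^ 2 :=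
      csInf_le hCfin.bddBelow ⟨i, h1, h2, rfl⟩
    have := Real.sqrt_le_sqrt hle
    exact inv_anti₀ hsq this
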